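/- Suppose V : [0, ∞) → ℝ is nonnegative, differentiable, and satisfies V̇(t) ≤ −a·V(t)^{p} − b·V(t)^{q} for all t with V(t) > 0, where a, b > 0, p > 1 and 0 < q < 1. Then V(t) = 0 for all t ≥ T_max where T_max = 1/(a(p−1)) + 1/(b(1−q)); moreover T_max is independent of V(0). -/

import Mathlib

theorem fixed_time_stability (V : ℝ → ℝ) (a b p q : ℝ)
    (ha : 0 < a) (hb : 0 < b) (hp : 1 < p) (hq0 : 0 < q) (hq1 : q < 1)
    (hV0 : ∀ t : ℝ, 0 ≤ t → 0 ≤ V t)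
    (hVdiff : ∀ t : ℝ, 0 ≤ t → DifferentiableAt ℝ V t)
    (hVdot : ∀ t : ℝ, 0 ≤ t → 0 < V t →
      deriv V t ≤ -a * V t ^ p - b * V t ^ q) :
    ∀ t : ℝ, 1 / (a * (p - 1)) + 1 / (b * (1 - q)) ≤ t → V t = 0 := by
  have hp1 : 0 < p - 1 := by linarith
  have hq1' : 0 < 1 - q := by linarith
  set T1 : ℝ := 1 / (a * (p - 1)) with hT1def
  set Tm : ℝ := 1 / (a * (p - 1)) + 1 / (b * (1 - q)) with hTmdef
  have hT1pos : 0 < T1 := by rw [hT1def]; positivity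
  have hT2pos : 0 < 1 / (b * (1 - q)) := by positivity
  have hTmpos : 0 < Tm := by rw [hTmdef]; positivity
  have hT1Tm : T1 < Tm := by rw [hTmdef]; linarith
  have hcont : ContinuousOn V (Set.Ici 0) := fun t ht =>
    ((hVdiff t ht).continuousAt).continuousWithinAt
  -- V is antitone on [0, ∞)
  have hanti : AntitoneOn V (Set.Ici (0:ℝ)) := by
    apply antitoneOn_of_deriv_nonpos (convex_Ici 0) hcont
    · intro t ht
      rw [interior_Ici] at ht
      exact (hVdiff t ht.le).differentiableWithinAt
    · intro t ht
      rw [interior_Ici] at ht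
      rcases lt_or_eq_of_le (hV0 t ht.le) with hpos | h0
      · have h := hVdot t ht.le hpos
        have h1 : 0 < V t ^ p := Real.rpow_pos_of_pos hpos p
        have h2 : 0 < V t ^ q := Real.rpow_pos_of_pos hpos q
        nlinarith
      · have hmin : IsLocalMin V t := by
          have hev : ∀ᶠ y in nhds t, 0 < y := eventually_gt_nhds ht
          filter_upwards [hev] with y hy
          rw [← h0]; exact hV0 y hy.le
        rw [hmin.deriv_eq_zero]
  -- main claim: V Tm = 0
  have hVTm : V Tm = 0 := by
    by_contra hne
    have hVTmpos : 0 < V Tm := lt_of_le_of_ne (hV0 Tm hTmpos.le) (Ne.symm hne)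
    have hVposOn : ∀ t, 0 ≤ t → t ≤ Tm → 0 < V t := fun t ht htm =>
      lt_of_lt_of_le hVTmpos (hanti (Set.mem_Ici.2 ht) (Set.mem_Ici.2 hTmpos.le) htm)
    -- Phase 1: V T1 ≤ 1
    have hVT1 : V T1 ≤ 1 := by
      by_contra hgt
      push_neg at hgt
      have hge1 : ∀ t, 0 ≤ t → t ≤ T1 → 1 < V t := fun t ht ht1 =>
        lt_of_lt_of_le hgt (hanti (Set.mem_Ici.2 ht) (Set.mem_Ici.2 hT1pos.le) ht1)
      set g : ℝ → ℝ := fun s => V s ^ (1 - p) - a * (p - 1) * s with hgdef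
      have hmono : MonotoneOn g (Set.Icc 0 T1) := by
        apply monotoneOn_of_deriv_nonneg (convex_Icc 0 T1)
        · apply ContinuousOn.sub
          · exact ContinuousOn.rpow_const (hcont.mono (Set.Icc_subset_Ici_self))
              (fun t ht => Or.inl (ne_of_gt (hVposOn t ht.1 (ht.2.trans hT1Tm.le))))
          · exact (continuous_const.mul continuous_id).continuousOn
        · intro t ht
          rw [interior_Icc] at ht
          have hVt : 0 < V t := hVposOn t ht.1.le (ht.2.le.trans hT1Tm.le)
          have h1 := ((hVdiff t ht.1.le).hasDerivAt).rpow_const (p := 1 - p) (Or.inl (ne_of_gt hVt))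
          have h2 : HasDerivAt (fun s : ℝ => a * (p - 1) * s) (a * (p - 1)) t := by
            simpa using (hasDerivAt_id t).const_mul (a * (p - 1))
          exact (h1.sub h2).differentiableAt.differentiableWithinAt
        · intro t ht
          rw [interior_Icc] at ht
          have hVt : 0 < V t := hVposOn t ht.1.le (ht.2.le.trans hT1Tm.le)
          have h1 := ((hVdiff t ht.1.le).hasDerivAt).rpow_const (p := 1 - p) (Or.inl (ne_of_gt hVt))
          have h2 : HasDerivAt (fun s : ℝ => a * (p - 1) * s) (a * (p - 1)) t := by
            simpa using (hasDerivAt_id t).const_mul (a * (p - 1))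
          rw [hgdef, (h1.fun_sub h2).deriv]
          have hdV := hVdot t ht.1.le hVt
          have hX : V t ^ (1 - p - 1) * V t ^ p = 1 := by
            rw [← Real.rpow_add hVt, show (1 - p - 1) + p = 0 by ring, Real.rpow_zero]
          have hXpos : 0 < V t ^ (1 - p - 1) := Real.rpow_pos_of_pos hVt _
          have hqpos : 0 < V t ^ q := Real.rpow_pos_of_pos hVt q
          have key : V t ^ (1 - p - 1) * deriv V t ≤
              -a - b * (V t ^ (1 - p - 1) * V t ^ q) := by
            nlinarith [mul_le_mul_of_nonneg_left hdV hXpos.le]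
          nlinarith [mul_le_mul_of_nonneg_left key hp1.le,
            mul_nonneg (mul_nonneg hb.le hXpos.le) hqpos.le,
            mul_nonneg (mul_nonneg hp1.le (mul_nonneg hb.le hXpos.le)) hqpos.le]
      have hle := hmono (Set.mem_Icc.2 ⟨le_refl 0, hT1pos.le⟩)
        (Set.mem_Icc.2 ⟨hT1pos.le, le_refl T1⟩) hT1pos.le
      have hV0pos : 0 < V 0 ^ (1 - p) :=
        Real.rpow_pos_of_pos (hVposOn 0 le_rfl hTmpos.le) _
      have hVT1lt : V T1 ^ (1 - p) < 1 :=
        Real.rpow_lt_one_of_one_lt_of_neg hgt (by linarith)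
      have haT1 : a * (p - 1) * T1 = 1 := by
        rw [hT1def]; field_simp
      simp only [hgdef] at hle
      rw [mul_zero, sub_zero] at hle
      linarith
    -- Phase 2: contradiction
    set h : ℝ → ℝ := fun s => V s ^ (1 - q) + b * (1 - q) * s with hhdef
    have hantih : AntitoneOn h (Set.Icc T1 Tm) := by
      apply antitoneOn_of_deriv_nonpos (convex_Icc T1 Tm)
      · apply ContinuousOn.add
        · apply ContinuousOn.rpow_const
            (hcont.mono (Set.Icc_subset_Ici_self.trans (Set.Ici_subset_Ici.2 hT1pos.le)))
          exact fun t ht => Or.inl (ne_of_gt (hVposOn t (hT1pos.le.trans ht.1) ht.2))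
        · exact (continuous_const.mul continuous_id).continuousOn
      · intro t ht
        rw [interior_Icc] at ht
        have ht0 : 0 ≤ t := (hT1pos.trans ht.1).le
        have hVt : 0 < V t := hVposOn t ht0 ht.2.le
        have h1 := ((hVdiff t ht0).hasDerivAt).rpow_const (p := 1 - q) (Or.inl (ne_of_gt hVt))
        have h2 : HasDerivAt (fun s : ℝ => b * (1 - q) * s) (b * (1 - q)) t := by
          simpa using (hasDerivAt_id t).const_mul (b * (1 - q))
        exact (h1.add h2).differentiableAt.differentiableWithinAt
      · intro t ht
        rw [interior_Icc] at ht
        have ht0 : 0 ≤ t := (hT1pos.trans ht.1).le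
        have hVt : 0 < V t := hVposOn t ht0 ht.2.le
        have h1 := ((hVdiff t ht0).hasDerivAt).rpow_const (p := 1 - q) (Or.inl (ne_of_gt hVt))
        have h2 : HasDerivAt (fun s : ℝ => b * (1 - q) * s) (b * (1 - q)) t := by
          simpa using (hasDerivAt_id t).const_mul (b * (1 - q))
        rw [hhdef, (h1.fun_add h2).deriv]
        have hdV := hVdot t ht0 hVt
        have hX : V t ^ (1 - q - 1) * V t ^ q = 1 := by
          rw [← Real.rpow_add hVt, show (1 - q - 1) + q = 0 by ring, Real.rpow_zero]
        have hXpos : 0 < V t ^ (1 - q - 1) := Real.rpow_pos_of_pos hVt _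
        have hppos : 0 < V t ^ p := Real.rpow_pos_of_pos hVt p
        have key : V t ^ (1 - q - 1) * deriv V t ≤
            -a * (V t ^ (1 - q - 1) * V t ^ p) - b := by
          nlinarith [mul_le_mul_of_nonneg_left hdV hXpos.le]
        nlinarith [mul_le_mul_of_nonneg_left key hq1'.le,
          mul_nonneg (mul_nonneg ha.le hXpos.le) hppos.le,
          mul_nonneg (mul_nonneg hq1'.le (mul_nonneg ha.le hXpos.le)) hppos.le]
    have hle := hantih (Set.mem_Icc.2 ⟨le_refl T1, hT1Tm.le⟩)
      (Set.mem_Icc.2 ⟨hT1Tm.le, le_refl Tm⟩) hT1Tm.le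
    have hVT1le : V T1 ^ (1 - q) ≤ 1 :=
      Real.rpow_le_one (hV0 T1 hT1pos.le) hVT1 hq1'.le
    have hVTmpow : 0 < V Tm ^ (1 - q) := Real.rpow_pos_of_pos hVTmpos _
    have hbT : b * (1 - q) * Tm - b * (1 - q) * T1 = 1 := by
      rw [hTmdef, hT1def]; field_simp; ring
    simp only [hhdef] at hle
    linarith
  -- conclude
  intro t ht
  have hVt := hanti (Set.mem_Ici.2 hTmpos.le) (Set.mem_Ici.2 (hTmpos.le.trans ht)) ht
  rw [hVTm] at hVt
  exact le_antisymm hVt (hV0 t (hTmpos.le.trans ht))
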